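/- Let α > -1, r > 0, and 0 < s < t, and let µ be a positive Borel measure on the unit disk 𝔻. Then there exist constants C₁, C > 0 such that for every a ∈ 𝔻: C₁ (1-|a|)^{-(α+2)} ∫_{D(a, r+s)} dµ(z) ≤ (1-|a|)^{-(α+2)} ∫_{D(a,r)} (1-|w|)^{-(α+2)} (∫_{D(w,t)} dµ(z)) dm_α(w) ≤ C (1-|a|)^{-(α+2)} ∫_{D(a, r+t)} dµ(z). -/

import Mathlib

open MeasureTheory Set
open scoped ENNReal

noncomputable section

/-- The open unit disk in the complex plane. -/
def unitDisk : Set ℂ := Metric.ball 0 1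

/-- Normalized Lebesgue area measure on ℂ (so that the unit disk has measure 1). -/
def m2 : Measure ℂ := (ENNReal.ofReal Real.pi)⁻¹ • volume

/-- The weighted measure `dm_α(z) = (1-|z|)^α dm₂(z)`. -/
def mA (α : ℝ) : Measure ℂ :=
  m2.withDensity fun z => ENNReal.ofReal ((1 - ‖z‖) ^ α)

/-- The Lusin cone `Γ_σ(ξ) = {z ∈ 𝔻 : |1 - ξ̄ z| < σ (1 - |z|)}`. -/
def lusinCone (σ : ℝ) (ξ : ℂ) : Set ℂ :=
  {z ∈ unitDisk | ‖1 - (starRingEnd ℂ) ξ * z‖ < σ * (1 - ‖z‖)}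

/-- The pseudo-hyperbolic distance `|φ_w(z)|` where `φ_w(z) = (w - z)/(1 - w̄ z)`. -/
def pseudoDist (z w : ℂ) : ℝ :=
  ‖(w - z) / (1 - (starRingEnd ℂ) w * z)‖

/-- The Bergman (hyperbolic) distance on the unit disk. -/
def bergmanDist (z w : ℂ) : ℝ :=
  (1 / 2) * Real.log ((1 + pseudoDist z w) / (1 - pseudoDist z w))

/-- The Bergman disk `D(a,t) = {w ∈ 𝔻 : d(w,a) < t}`. -/
def bergmanDisk (a : ℂ) (t : ℝ) : Set ℂ :=
  {w ∈ unitDisk | bergmanDist w a < t}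

/-- The Carleson box over the arc of the unit circle with midpoint `e^{iθ}` and arclength `h`. -/
def carlesonBox (θ h : ℝ) : Set ℂ :=
  {z : ℂ | 1 - h < ‖z‖ ∧ ‖z‖ < 1 ∧
    ∃ φ : ℝ, |φ - θ| < h / 2 ∧
      z = (‖z‖ : ℂ) * Complex.exp (φ * Complex.I)}

/-- Center of the Carleson box over the arc with midpoint `e^{iθ}` and arclength `h`. -/
def boxCenter (θ h : ℝ) : ℂ := ((1 - h / 2 : ℝ) : ℂ) * Complex.exp (θ * Complex.I)

/-- Arcs of the unit circle, parametrized by midpoint angle (first component)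
and arclength (second component). -/
def Arc : Type := {p : ℝ × ℝ // 0 < p.2 ∧ p.2 ≤ 2 * Real.pi}

/-- The weak Lorentz `L^{q,∞}` quasinorm of a function on the unit circle
(the circle being parametrized by arclength `φ ↦ e^{iφ}`, `φ ∈ [0, 2π)`). -/
def wnorm (q : ℝ) (g : ℂ → ℝ≥0∞) : ℝ≥0∞ :=
  ⨆ l : Ioi (0 : ℝ),
    ENNReal.ofReal l.1 *
      (volume {φ : ℝ | φ ∈ Ico 0 (2 * Real.pi) ∧
        ENNReal.ofReal l.1 < g (Complex.exp (φ * Complex.I))}) ^ (1 / q)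

/-- The dyadic-type region `Δ_z` attached to a point of the unit disk. -/
def dyadicRegion (z : ℂ) : Set ℂ :=
  {w : ℂ | |Complex.arg w - Complex.arg z| < 1 - ‖z‖ ∧
    (1 - ‖z‖) / 2 < 1 - ‖w‖ ∧
    1 - ‖w‖ < 2 * (1 - ‖z‖)}

namespace S7

/-- tanh -/
def tau (u : ℝ) : ℝ := (Real.exp (2*u) - 1) / (Real.exp (2*u) + 1)

lemma exp_pos' (u : ℝ) : (0:ℝ) < Real.exp (2*u) + 1 := by positivity

lemma tau_lt_one (u : ℝ) : tau u < 1 := by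
  unfold tau
  rw [div_lt_one (exp_pos' u)]; linarith

lemma tau_nonneg {u : ℝ} (hu : 0 ≤ u) : 0 ≤ tau u := by
  unfold tau
  have h : (1:ℝ) ≤ Real.exp (2*u) := by
    rw [← Real.exp_zero]; exact Real.exp_le_exp.2 (by linarith)
  have h2 := exp_pos' u
  apply div_nonneg <;> linarith

lemma tau_pos {u : ℝ} (hu : 0 < u) : 0 < tau u := by
  unfold tau
  have h : (1:ℝ) < Real.exp (2*u) := by
    rw [← Real.exp_zero]; exact Real.exp_lt_exp.2 (by linarith)
  have h2 := exp_pos' u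
  apply div_pos <;> linarith

lemma tau_lt_tau {u v : ℝ} (h : u < v) : tau u < tau v := by
  unfold tau
  have h1 := exp_pos' u
  have h2 := exp_pos' v
  have h3 : Real.exp (2*u) < Real.exp (2*v) := Real.exp_lt_exp.2 (by linarith)
  rw [div_lt_div_iff₀ h1 h2]; nlinarith

lemma tau_add (u v : ℝ) : tau (u + v) * (1 + tau u * tau v) = tau u + tau v := by
  unfold tau
  have h1 := exp_pos' u
  have h2 := exp_pos' v
  have h3 := exp_pos' (u+v)
  have he : Real.exp (2*(u+v)) = Real.exp (2*u) * Real.exp (2*v) := by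
    rw [← Real.exp_add]; ring_nf
  rw [he]
  field_simp
  ring

/-- link between bergmanDist-type expression and tau -/
lemma log_lt_iff_tau {ρ d : ℝ} (h0 : 0 ≤ ρ) (h1 : ρ < 1) (hd : 0 < d) :
    (1/2) * Real.log ((1+ρ)/(1-ρ)) < d ↔ ρ < tau d := by
  have hx : (0:ℝ) < (1+ρ)/(1-ρ) := div_pos (by linarith) (by linarith)
  have hE := exp_pos' d
  rw [show (1/2) * Real.log ((1+ρ)/(1-ρ)) < d ↔ Real.log ((1+ρ)/(1-ρ)) < 2*d by
    constructor <;> intro h <;> linarith]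
  rw [Real.log_lt_iff_lt_exp hx, div_lt_iff₀ (by linarith), tau, lt_div_iff₀ hE]
  constructor <;> intro h <;> nlinarith

end S7

namespace S7

local notation "ab" => norm
local notation "cj" => (starRingEnd ℂ)

lemma mem_unitDisk {z : ℂ} : z ∈ unitDisk ↔ ab z < 1 := by
  simp [unitDisk, Metric.mem_ball, Complex.dist_eq]

lemma denom_ne_zero {w z : ℂ} (hw : ab w < 1) (hz : ab z < 1) : (1 : ℂ) - cj w * z ≠ 0 := by
  intro h
  have h1 : ab (cj w * z) < 1 := by
    rw [norm_mul, Complex.norm_conj]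
    nlinarith [norm_nonneg w, norm_nonneg z]
  have h2 : (1:ℂ) = cj w * z := by linear_combination h
  rw [← h2] at h1; simp at h1

lemma normSq_identity (w z : ℂ) :
    Complex.normSq (1 - cj w * z) - Complex.normSq (w - z)
      = (1 - Complex.normSq w) * (1 - Complex.normSq z) := by
  simp only [Complex.normSq_apply, Complex.sub_re, Complex.sub_im, Complex.one_re, Complex.one_im,
    Complex.mul_re, Complex.mul_im, Complex.conj_re, Complex.conj_im]
  ring

lemma pseudoDist_eq (z w : ℂ) : pseudoDist z w = ab (w - z) / ab (1 - cj w * z) := by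
  rw [pseudoDist, norm_div]

lemma pseudoDist_nonneg (z w : ℂ) : 0 ≤ pseudoDist z w := norm_nonneg _

lemma pseudoDist_symm (z w : ℂ) : pseudoDist z w = pseudoDist w z := by
  rw [pseudoDist_eq, pseudoDist_eq]
  have h1 : ab (w - z) = ab (z - w) := norm_sub_rev w z
  have hc : cj (1 - cj w * z) = 1 - cj z * w := by
    simp [map_sub, map_mul]; ring
  have h2 : ab (1 - cj w * z) = ab (1 - cj z * w) := by
    rw [← hc, Complex.norm_conj]
  rw [h1, h2]

lemma pseudoDist_lt_one {z w : ℂ} (hz : ab z < 1) (hw : ab w < 1) : pseudoDist z w < 1 := by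
  have hd := denom_ne_zero hw hz
  have hdpos : 0 < ab (1 - cj w * z) := by
    simpa [norm_pos_iff] using hd
  rw [pseudoDist_eq, div_lt_one hdpos, ← Real.sqrt_sq (norm_nonneg (w-z)),
    ← Real.sqrt_sq hdpos.le]
  apply Real.sqrt_lt_sqrt (by positivity)
  have h1 : (ab (w - z))^2 = Complex.normSq (w - z) := Complex.sq_norm _
  have h2 : (ab (1 - cj w * z))^2 = Complex.normSq (1 - cj w * z) := Complex.sq_norm _
  rw [h1, h2]
  have key := normSq_identity w z
  have hw2 : Complex.normSq w < 1 := by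
    rw [← Complex.sq_norm]; nlinarith [norm_nonneg w]
  have hz2 : Complex.normSq z < 1 := by
    rw [← Complex.sq_norm]; nlinarith [norm_nonneg z]
  nlinarith

lemma pseudoDist_self (z : ℂ) : pseudoDist z z = 0 := by
  simp [pseudoDist]

/-- Möbius map -/
def phi (a z : ℂ) : ℂ := (a - z) / (1 - cj a * z)

lemma pseudoDist_phi_zero (z a : ℂ) : pseudoDist z a = ab (phi a z) := rfl

lemma phi_mem {a z : ℂ} (ha : ab a < 1) (hz : ab z < 1) : ab (phi a z) < 1 := by
  rw [← pseudoDist_phi_zero]; exact pseudoDist_lt_one hz ha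

lemma phi_invol {a z : ℂ} (ha : ab a < 1) (hz : ab z < 1) : phi a (phi a z) = z := by
  have h1 := denom_ne_zero ha hz
  have h1' : (1:ℂ) - z * cj a ≠ 0 := by rwa [mul_comm]
  have h2 := denom_ne_zero ha (phi_mem ha hz)
  unfold phi at h2 ⊢
  rw [div_eq_iff h2]
  field_simp
  ring

/-- Möbius invariance of the pseudo-hyperbolic distance. -/
lemma pseudoDist_phi {u x y : ℂ} (hu : ab u < 1) (hx : ab x < 1) (hy : ab y < 1) :
    pseudoDist (phi u x) (phi u y) = pseudoDist x y := by
  have hA : (1:ℂ) - cj u * x ≠ 0 := denom_ne_zero hu hx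
  have hB : (1:ℂ) - cj u * y ≠ 0 := denom_ne_zero hu hy
  have hB' : (1:ℂ) - u * cj y ≠ 0 := by
    intro h; apply hB
    have := congrArg (cj) h
    simpa [map_sub, map_mul] using this
  have hA' : (1:ℂ) - x * cj u ≠ 0 := by rwa [mul_comm]
  have hB2 : (1:ℂ) - y * cj u ≠ 0 := by rwa [mul_comm]
  have hB3 : (1:ℂ) - cj y * u ≠ 0 := by rwa [mul_comm]
  have E1 : phi u y - phi u x = (x - y) * (1 - u * cj u) / ((1 - cj u * x) * (1 - cj u * y)) := by
    unfold phi; field_simp; ring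
  have hcj : cj (1 - cj u * y) = 1 - u * cj y := by
    simp [map_sub, map_mul]
  have E2 : 1 - cj (phi u y) * phi u x
      = (1 - u * cj u) * (1 - cj y * x) / ((1 - u * cj y) * (1 - cj u * x)) := by
    unfold phi
    rw [map_div₀, map_sub, hcj]
    field_simp
    ring
  have hK : ab (1 - u * cj u) ≠ 0 := by
    have : (1:ℂ) - u * cj u ≠ 0 := by
      intro h; apply denom_ne_zero hu hu
      linear_combination h
    simpa [norm_ne_zero_iff] using this
  rw [pseudoDist, pseudoDist, E1, E2]
  rw [norm_div, norm_div, norm_div]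
  rw [norm_mul, norm_mul, norm_mul]
  have hcjB : ab (1 - u * cj y) = ab (1 - cj u * y) := by
    rw [← hcj, Complex.norm_conj]
  have h1 : ab (1 - cj u * x) ≠ 0 := by simpa [norm_ne_zero_iff] using hA
  have h2 : ab (1 - cj u * y) ≠ 0 := by simpa [norm_ne_zero_iff] using hB
  rw [norm_mul, hcjB]
  have hyx : (1:ℂ) - cj y * x ≠ 0 := denom_ne_zero hy hx
  have h3 : ab (1 - cj y * x) ≠ 0 := by simpa [norm_ne_zero_iff] using hyx
  have hxy : ab (x - y) = ab (y - x) := norm_sub_rev x y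
  rw [hxy]
  have h1' : ab (1 - x * cj u) ≠ 0 := by rwa [mul_comm]
  have h2' : ab (1 - y * cj u) ≠ 0 := by rwa [mul_comm]
  have h3' : ab (1 - x * cj y) ≠ 0 := by rwa [mul_comm]
  rw [norm_div]
  field_simp

end S7

namespace S7

local notation "ab" => norm
local notation "cj" => (starRingEnd ℂ)

lemma abs_pos_of_disk {w z : ℂ} (hw : ab w < 1) (hz : ab z < 1) :
    0 < ab (1 - cj w * z) :=
  norm_pos_iff.mpr (denom_ne_zero hw hz)

/-- triangle through 0 -/
lemma zero_triangle {p q : ℂ} (hp : ab p < 1) (hq : ab q < 1) :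
    pseudoDist p q * (1 + ab p * ab q) ≤ ab p + ab q := by
  have hD : 0 < ab (1 - cj q * p) := abs_pos_of_disk hq hp
  rw [pseudoDist_eq, div_mul_eq_mul_div, div_le_iff₀ hD]
  set P := ab p with hP
  set Q := ab q with hQ
  have hP0 : 0 ≤ P := norm_nonneg p
  have hQ0 : 0 ≤ Q := norm_nonneg q
  set u := (cj q * p).re with hu
  have h1 : Complex.normSq (q - p) = Q^2 + P^2 - 2*u := by
    rw [Complex.normSq_sub]
    have : (q * cj p).re = u := by
      rw [hu, ← Complex.conj_re (cj q * p)]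
      congr 1; simp [map_mul]
    rw [this, ← Complex.sq_norm, ← Complex.sq_norm]
  have h2 : Complex.normSq (1 - cj q * p) = 1 + Q^2 * P^2 - 2*u := by
    rw [Complex.normSq_sub]
    have e1 : ((1:ℂ) * cj (cj q * p)).re = u := by
      rw [one_mul, Complex.conj_re]
    rw [e1]
    have : Complex.normSq (cj q * p) = Q^2 * P^2 := by
      rw [← Complex.sq_norm, norm_mul, Complex.norm_conj, mul_pow]
    rw [this, Complex.normSq_one]
  have hub : |u| ≤ Q * P := by
    calc |u| ≤ ab (cj q * p) := Complex.abs_re_le_norm _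
    _ = Q * P := by rw [norm_mul, Complex.norm_conj]
  have hub1 : -(Q*P) ≤ u := by cases' abs_le.1 hub with h _; linarith
  have sq1 : (ab (q - p))^2 = Q^2 + P^2 - 2*u := by rw [Complex.sq_norm]; exact h1
  have sq2 : (ab (1 - cj q * p))^2 = 1 + Q^2*P^2 - 2*u := by rw [Complex.sq_norm]; exact h2
  have hL0 : 0 ≤ ab (q - p) := norm_nonneg _
  have key : (ab (q - p) * (1 + P * Q))^2 ≤ ((P + Q) * ab (1 - cj q * p))^2 := by
    have expand : (ab (q - p) * (1 + P * Q))^2 = (Q^2 + P^2 - 2*u) * (1 + P*Q)^2 := by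
      rw [mul_pow, sq1]
    have expand2 : ((P + Q) * ab (1 - cj q * p))^2 = (P+Q)^2 * (1 + Q^2*P^2 - 2*u) := by
      rw [mul_pow, sq2]
    rw [expand, expand2]
    nlinarith [mul_nonneg (mul_nonneg (sub_nonneg.2 hp.le) (sub_nonneg.2 hq.le)) (sub_nonneg.2 hub1),
      sq_nonneg (P - Q), sq_nonneg (P + Q), mul_nonneg hP0 hQ0]
  have hb : 0 ≤ (P + Q) * ab (1 - cj q * p) := by positivity
  have ha : 0 ≤ ab (q - p) * (1 + P * Q) := by positivity
  nlinarith [key, ha, hb]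

lemma pseudoDist_triangle_comb {x y u : ℂ} (hx : ab x < 1) (hy : ab y < 1) (hu : ab u < 1) :
    pseudoDist x y * (1 + pseudoDist x u * pseudoDist u y) ≤ pseudoDist x u + pseudoDist u y := by
  have h0 : pseudoDist x y = pseudoDist (phi u x) (phi u y) := (pseudoDist_phi hu hx hy).symm
  have h1 : pseudoDist x u = ab (phi u x) := pseudoDist_phi_zero x u
  have h2 : pseudoDist u y = ab (phi u y) := by
    rw [pseudoDist_symm]; exact pseudoDist_phi_zero y u
  rw [h0, h1, h2]
  exact zero_triangle (phi_mem hu hx) (phi_mem hu hy)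

/-- main triangle lemma in tau form -/
lemma pseudo_triangle_tau {x y u : ℂ} {A B : ℝ} (hx : ab x < 1) (hy : ab y < 1)
    (hu : ab u < 1) (hA : 0 < A) (hB : 0 < B)
    (h1 : pseudoDist x u ≤ tau A) (h2 : pseudoDist u y < tau B) :
    pseudoDist x y < tau (A + B) := by
  have tri := pseudoDist_triangle_comb hx hy hu
  have hTA1 := tau_lt_one A
  have hTB1 := tau_lt_one B
  have hTA0 := tau_nonneg hA.le
  have hTB0 := tau_nonneg hB.le
  have hadd := tau_add A B
  have hT1 := tau_lt_one (A+B)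
  have hp0 : 0 ≤ pseudoDist x y := pseudoDist_nonneg _ _
  have hp1 : 0 ≤ pseudoDist x u := pseudoDist_nonneg _ _
  have hp2 : 0 ≤ pseudoDist u y := pseudoDist_nonneg _ _
  set p0 := pseudoDist x y
  set p1 := pseudoDist x u
  set p2 := pseudoDist u y
  set TA := tau A
  set TB := tau B
  set T := tau (A+B)
  -- p0 (1 + p1 p2) ≤ p1 + p2 < stuff
  have hd1 : 0 < 1 + p1 * p2 := by nlinarith
  have hd2 : 0 < 1 + TA * TB := by nlinarith
  have key : (TA + TB) * (1 + p1*p2) - (p1 + p2) * (1 + TA*TB)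
      = (TA - p1)*(1 - p2*TB) + (TB - p2)*(1 - p1*TA) := by ring
  have hterm1 : 0 ≤ (TA - p1)*(1 - p2*TB) := by
    apply mul_nonneg (by linarith)
    nlinarith [pseudoDist_lt_one hu hy]
  have hterm2 : 0 < (TB - p2)*(1 - p1*TA) := by
    apply mul_pos (by linarith)
    nlinarith [pseudoDist_lt_one hx hu]
  nlinarith [mul_pos hd1 hd2, mul_le_mul_of_nonneg_right tri (le_of_lt hd2)]

end S7

namespace S7

local notation "ab" => norm
local notation "cj" => (starRingEnd ℂ)

lemma one_sub_abs_le (x : ℂ) : 1 - ab x ≤ ab (1 - x) := by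
  have := norm_sub_norm_le (1:ℂ) x
  simpa using this

lemma mem_bergmanDisk_iff {a w : ℂ} {rad : ℝ} (ha : ab a < 1) (hrad : 0 < rad) :
    w ∈ bergmanDisk a rad ↔ ab w < 1 ∧ pseudoDist w a < tau rad := by
  constructor
  · rintro ⟨hw, hd⟩
    rw [mem_unitDisk] at hw
    refine ⟨hw, ?_⟩
    rw [← log_lt_iff_tau (pseudoDist_nonneg w a) (pseudoDist_lt_one hw ha) hrad]
    exact hd
  · rintro ⟨hw, hd⟩
    refine ⟨mem_unitDisk.2 hw, ?_⟩
    rw [show bergmanDist w a = (1/2) * Real.log ((1 + pseudoDist w a)/(1 - pseudoDist w a)) from rfl,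
      log_lt_iff_tau (pseudoDist_nonneg w a) (pseudoDist_lt_one hw ha) hrad]
    exact hd

lemma bergmanDisk_eq {a : ℂ} {rad : ℝ} (ha : ab a < 1) (hrad : 0 < rad) :
    bergmanDisk a rad = {w : ℂ | ab w < 1 ∧ ab (a - w) < tau rad * ab (1 - cj a * w)} := by
  ext w
  rw [mem_bergmanDisk_iff ha hrad]
  constructor
  · rintro ⟨hw, hd⟩
    refine ⟨hw, ?_⟩
    rw [pseudoDist_eq, div_lt_iff₀ (abs_pos_of_disk ha hw)] at hd
    exact hd
  · rintro ⟨hw, hd⟩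
    refine ⟨hw, ?_⟩
    rw [pseudoDist_eq, div_lt_iff₀ (abs_pos_of_disk ha hw)]
    exact hd

lemma isOpen_bergmanDisk {a : ℂ} {rad : ℝ} (ha : ab a < 1) (hrad : 0 < rad) :
    IsOpen (bergmanDisk a rad) := by
  rw [bergmanDisk_eq ha hrad]
  have h1 : Continuous fun w : ℂ => ab (a - w) :=
    continuous_norm.comp (continuous_const.sub continuous_id)
  have h2 : Continuous fun w : ℂ => tau rad * ab (1 - cj a * w) :=
    continuous_const.mul (continuous_norm.comp
      (continuous_const.sub (continuous_const.mul continuous_id)))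
  exact (isOpen_lt continuous_norm continuous_const).inter (isOpen_lt h1 h2)

lemma measurableSet_bergmanDisk {a : ℂ} {rad : ℝ} (ha : ab a < 1) (hrad : 0 < rad) :
    MeasurableSet (bergmanDisk a rad) := (isOpen_bergmanDisk ha hrad).measurableSet

/-- comparison of 1-|w| and 1-|a| on pseudo-hyperbolic disks: lower bound -/
lemma one_sub_lower {a w : ℂ} {k : ℝ} (ha : ab a < 1) (hw : ab w < 1)
    (hk0 : 0 ≤ k) (hk1 : k < 1) (h : pseudoDist w a < k) :
    (1 - k^2)/4 * (1 - ab a) < 1 - ab w := by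
  have hD : 0 < ab (1 - cj a * w) := abs_pos_of_disk ha hw
  rw [pseudoDist_eq, div_lt_iff₀ hD] at h
  have hsq : (ab (1 - cj a * w))^2 - (ab (a - w))^2
      = (1 - (ab a)^2) * (1 - (ab w)^2) := by
    simp only [Complex.sq_norm]
    exact normSq_identity a w
  have hDl : 1 - ab a ≤ ab (1 - cj a * w) := by
    have h1 : ab (cj a * w) ≤ ab a := by
      rw [norm_mul, Complex.norm_conj]
      nlinarith [norm_nonneg a, norm_nonneg w]
    have := one_sub_abs_le (cj a * w)
    linarith
  have ha0 := norm_nonneg a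
  have hw0 := norm_nonneg w
  have habs0 := norm_nonneg (a - w)
  have hA1 : (0:ℝ) < 1 - ab a := by linarith
  have hW1 : (0:ℝ) < 1 - ab w := by linarith
  have hk2 : (0:ℝ) ≤ 1 - k^2 := by nlinarith
  have hN2 : (ab (a - w))^2 < k^2 * (ab (1 - cj a * w))^2 := by nlinarith
  have hstep : (1-k^2) * (1 - ab a)^2 < (1 - (ab a)^2) * (1 - (ab w)^2) := by
    have h1 : (1 - ab a)^2 ≤ (ab (1 - cj a * w))^2 := by nlinarith
    nlinarith [mul_le_mul_of_nonneg_left h1 hk2]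
  have h4 : (1 - (ab a)^2) * (1 - (ab w)^2) ≤ 4 * ((1 - ab a) * (1 - ab w)) := by
    nlinarith [mul_nonneg (mul_nonneg hA1.le hW1.le)
      (by nlinarith : (0:ℝ) ≤ 4 - (1 + ab a)*(1 + ab w))]
  nlinarith [hstep, h4, mul_pos hA1 hW1, sq_nonneg (1 - ab a)]

lemma one_sub_upper {a w : ℂ} {k : ℝ} (ha : ab a < 1) (hw : ab w < 1)
    (hk0 : 0 ≤ k) (hk1 : k < 1) (h : pseudoDist w a < k) :
    1 - ab w < 4/(1 - k^2) * (1 - ab a) := by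
  have h' : pseudoDist a w < k := by rw [pseudoDist_symm]; exact h
  have := one_sub_lower hw ha hk0 hk1 h'
  have hpos : 0 < 1 - k^2 := by nlinarith
  rw [div_mul_eq_mul_div, lt_div_iff₀ hpos]
  nlinarith [this]

lemma ball_subset_pseudo {w₀ w : ℂ} {ε : ℝ} (h0 : ab w₀ < 1) (hε0 : 0 < ε) (hε1 : ε < 1)
    (hw : ab (w - w₀) < ε * (1 - ab w₀)) : ab w < 1 ∧ pseudoDist w w₀ < ε := by
  have h1 : ab w ≤ ab w₀ + ab (w - w₀) := by
    calc ab w = ab (w₀ + (w - w₀)) := by ring_nf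
    _ ≤ ab w₀ + ab (w - w₀) := norm_add_le _ _
  have hw0 := norm_nonneg w₀
  have hwlt : ab w < 1 := by nlinarith
  refine ⟨hwlt, ?_⟩
  have hD : 0 < ab (1 - cj w₀ * w) := abs_pos_of_disk h0 hwlt
  have hDl : 1 - ab w₀ ≤ ab (1 - cj w₀ * w) := by
    have h2 : ab (cj w₀ * w) ≤ ab w₀ * (ab w₀ + ε * (1 - ab w₀)) := by
      rw [norm_mul, Complex.norm_conj]
      apply mul_le_mul_of_nonneg_left _ hw0
      linarith
    have h3 := one_sub_abs_le (cj w₀ * w)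
    nlinarith [mul_nonneg (mul_nonneg hw0 (by linarith : (0:ℝ) ≤ 1 - ab w₀))
      (by linarith : (0:ℝ) ≤ 1 - ε)]
  rw [pseudoDist_eq, div_lt_iff₀ hD]
  have : ab (w₀ - w) = ab (w - w₀) := norm_sub_rev _ _
  rw [this]
  nlinarith

lemma bergman_subset_euclid {a w : ℂ} {k : ℝ} (ha : ab a < 1) (hw : ab w < 1)
    (hk0 : 0 ≤ k) (hk1 : k < 1) (h : pseudoDist w a < k) :
    ab (w - a) < 2*k/(1-k) * (1 - ab a) := by
  have hD : 0 < ab (1 - cj a * w) := abs_pos_of_disk ha hw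
  rw [pseudoDist_eq, div_lt_iff₀ hD] at h
  have hsplit : ab (1 - cj a * w) ≤ (1 - (ab a)^2) + ab (a - w) := by
    have e : (1:ℂ) - cj a * w = (1 - cj a * a) + cj a * (a - w) := by ring
    rw [e]
    calc ab ((1 - cj a * a) + cj a * (a - w))
        ≤ ab (1 - cj a * a) + ab (cj a * (a - w)) := norm_add_le _ _
    _ ≤ (1 - (ab a)^2) + ab (a - w) := by
        have e2 : (1:ℂ) - cj a * a = ((1 - (ab a)^2 : ℝ) : ℂ) := by
          have : cj a * a = (Complex.normSq a : ℂ) := by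
            rw [mul_comm, Complex.mul_conj]
          rw [this, Complex.normSq_eq_norm_sq]
          push_cast; ring
        have e3 : ab (1 - cj a * a) = 1 - (ab a)^2 := by
          rw [e2, Complex.norm_real, Real.norm_eq_abs, abs_of_nonneg (by nlinarith [norm_nonneg a])]
        have e4 : ab (cj a * (a - w)) ≤ ab (a - w) := by
          rw [norm_mul, Complex.norm_conj]
          nlinarith [norm_nonneg (a - w), norm_nonneg a]
        linarith
  have ha0 := norm_nonneg a
  have hanw : ab (w - a) = ab (a - w) := norm_sub_rev _ _
  rw [hanw, div_mul_eq_mul_div, lt_div_iff₀ (by linarith : (0:ℝ) < 1 - k)]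
  nlinarith [norm_nonneg (a - w), mul_le_mul_of_nonneg_left hsplit hk0,
    mul_nonneg hk0 (sq_nonneg (1 - ab a))]

end S7

namespace S7

local notation "ab" => norm
local notation "cj" => (starRingEnd ℂ)

lemma ray_pdist {c : ℂ} {lam : ℝ} (hc : ab c < 1) (h0 : 0 ≤ lam) (h1 : lam ≤ 1) :
    pseudoDist c ((lam:ℂ) * c) = (ab c - lam * ab c) / (1 - lam * (ab c)^2) := by
  have hns : Complex.normSq c < 1 := by
    rw [Complex.normSq_eq_norm_sq]; nlinarith [norm_nonneg c]
  have hns0 : 0 ≤ Complex.normSq c := Complex.normSq_nonneg c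
  rw [pseudoDist, norm_div]
  have e1 : (lam:ℂ) * c - c = ((lam - 1 : ℝ):ℂ) * c := by push_cast; ring
  have e2 : (1:ℂ) - cj ((lam:ℂ)*c) * c = ((1 - lam * Complex.normSq c : ℝ):ℂ) := by
    rw [map_mul]
    have : cj ((lam:ℝ):ℂ) = ((lam:ℝ):ℂ) := Complex.conj_ofReal lam
    rw [this]
    have : cj c * c = (Complex.normSq c : ℂ) := by rw [mul_comm, Complex.mul_conj]
    push_cast
    rw [mul_assoc, this]
  rw [e1, e2, norm_mul, Complex.norm_real, Real.norm_eq_abs, Complex.norm_real, Real.norm_eq_abs,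
    abs_of_nonpos (by linarith : lam - 1 ≤ 0),
    abs_of_nonneg (by nlinarith : (0:ℝ) ≤ 1 - lam * Complex.normSq c)]
  rw [Complex.normSq_eq_norm_sq]
  try ring_nf

lemma exists_mid {a z : ℂ} {del T₀ : ℝ} (ha : ab a < 1) (hz : ab z < 1)
    (hdel : 0 < del) (hT : 0 < T₀) (hzlt : pseudoDist z a < tau (del + T₀)) :
    ∃ w : ℂ, ab w < 1 ∧ pseudoDist w a ≤ tau del ∧ pseudoDist z w < tau T₀ := by
  set c := phi a z with hc_def
  have hceq : pseudoDist z a = ab c := pseudoDist_phi_zero z a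
  have hc1 : ab c < 1 := by
    rw [← hceq]; exact pseudoDist_lt_one hz ha
  by_cases hcase : ab c ≤ tau del
  · exact ⟨z, hz, by rw [hceq]; exact hcase, by rw [pseudoDist_self]; exact tau_pos hT⟩
  · push_neg at hcase
    have hx0 : 0 < ab c := lt_of_le_of_lt (tau_nonneg hdel.le) hcase
    set T := tau del with hT_def
    set lam := T / ab c with hlam_def
    have hT0 : 0 ≤ T := tau_nonneg hdel.le
    have hlam0 : 0 ≤ lam := div_nonneg hT0 hx0.le
    have hlam1 : lam ≤ 1 := by
      rw [div_le_one hx0]; exact hcase.le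
    have hlc : ab ((lam:ℂ) * c) = T := by
      rw [norm_mul, Complex.norm_real, Real.norm_eq_abs, abs_of_nonneg hlam0, hlam_def,
        div_mul_cancel₀ _ (ne_of_gt hx0)]
    have hlc1 : ab ((lam:ℂ) * c) < 1 := by rw [hlc]; exact tau_lt_one del
    refine ⟨phi a ((lam:ℂ) * c), phi_mem ha hlc1, ?_, ?_⟩
    · have : pseudoDist (phi a ((lam:ℂ)*c)) a = ab (phi a (phi a ((lam:ℂ)*c))) :=
        pseudoDist_phi_zero _ a
      rw [this, phi_invol ha hlc1, hlc]
    · have hz_eq : z = phi a c := (phi_invol ha hz).symm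
      have step1 : pseudoDist z (phi a ((lam:ℂ)*c)) = pseudoDist c ((lam:ℂ)*c) := by
        conv_lhs => rw [hz_eq]
        exact pseudoDist_phi ha hc1 hlc1
      rw [step1, ray_pdist hc1 hlam0 hlam1]
      have hlx : lam * ab c = T := by
        rw [hlam_def, div_mul_cancel₀ _ (ne_of_gt hx0)]
      have hlx2 : lam * (ab c)^2 = T * ab c := by
        rw [pow_two, ← mul_assoc, hlx]
      rw [hlx, hlx2]
      set x := ab c
      set G := tau T₀ with hG_def
      have hG0 : 0 < G := tau_pos hT
      have hG1 : G < 1 := tau_lt_one T₀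
      have hT1 : T < 1 := tau_lt_one del
      have hx1 : x < 1 := hc1
      have hTx : 0 < 1 - T * x := by nlinarith
      rw [div_lt_iff₀ hTx]
      have hadd := tau_add T₀ del
      have hxlt : x < tau (T₀ + del) := by
        rw [add_comm]
        rw [hceq] at hzlt; exact hzlt
      have hTsum1 : tau (T₀ + del) ≤ 1 := (tau_lt_one _).le
      nlinarith [mul_pos hG0 (tau_pos hdel)]

end S7

namespace S7

local notation "ab" => norm

/-- the weight appearing in the statement -/
def gk (α : ℝ) (w : ℂ) : ℝ≥0∞ := (ENNReal.ofReal ((1 - ‖w‖) ^ (α+2)))⁻¹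

lemma measurable_gk (α : ℝ) : Measurable (gk α) := by
  apply Measurable.inv
  apply ENNReal.measurable_ofReal.comp
  exact (measurable_const.sub continuous_norm.measurable).pow measurable_const

lemma measurable_dens (α : ℝ) :
    Measurable (fun w : ℂ => ENNReal.ofReal ((1 - ‖w‖) ^ α)) := by
  apply ENNReal.measurable_ofReal.comp
  exact (measurable_const.sub continuous_norm.measurable).pow measurable_const

lemma gk_pos (α : ℝ) (w : ℂ) : 0 < gk α w := by
  rw [gk, ENNReal.inv_pos]
  exact ENNReal.ofReal_ne_top

lemma m2_ball (c : ℂ) (R : ℝ) : m2 (Metric.ball c R) = (ENNReal.ofReal R)^2 := by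
  rw [m2, Measure.smul_apply, Complex.volume_ball, smul_eq_mul]
  have hpi : ENNReal.ofReal Real.pi = (NNReal.pi : ℝ≥0∞) := by
    rw [← NNReal.coe_real_pi, ENNReal.ofReal_coe_nnreal]
  rw [hpi, mul_comm ((ENNReal.ofReal R)^2) _, ← mul_assoc, ENNReal.inv_mul_cancel, one_mul]
  · exact_mod_cast NNReal.coe_ne_zero.1 (by rw [NNReal.coe_real_pi]; exact Real.pi_ne_zero)
  · exact ENNReal.coe_ne_top

lemma mA_apply (α : ℝ) {S : Set ℂ} (hS : MeasurableSet S) :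
    mA α S = ∫⁻ w in S, ENNReal.ofReal ((1 - ‖w‖) ^ α) ∂m2 :=
  withDensity_apply _ hS

/-- ratio bound for rpow with sign-unknown exponent -/
lemma rpow_ratio {α d x cl cu : ℝ} (hd : 0 < d) (hcl : 0 < cl) (hcu : 0 < cu)
    (h1 : cl * d ≤ x) (h2 : x ≤ cu * d) :
    min (cl ^ α) (cu ^ α) * d ^ α ≤ x ^ α ∧
      x ^ α ≤ max (cl ^ α) (cu ^ α) * d ^ α := by
  have hx : 0 < x := lt_of_lt_of_le (by positivity) h1
  have hratio : x = (x/d) * d := by field_simp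
  have hq : 0 < x / d := by positivity
  have hql : cl ≤ x / d := by rw [le_div_iff₀ hd]; linarith
  have hqu : x / d ≤ cu := by rw [div_le_iff₀ hd]; linarith
  have hsplit : x ^ α = (x/d)^α * d^α := by
    rw [hratio, Real.mul_rpow hq.le hd.le]
    rw [← hratio]
  constructor
  · rw [hsplit]
    apply mul_le_mul_of_nonneg_right _ (Real.rpow_nonneg hd.le α)
    rcases le_or_gt 0 α with hα | hα
    · exact le_trans (min_le_left _ _) (Real.rpow_le_rpow hcl.le hql hα)
    · exact le_trans (min_le_right _ _)
        (Real.rpow_le_rpow_of_nonpos hq hqu hα.le)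
  · rw [hsplit]
    apply mul_le_mul_of_nonneg_right _ (Real.rpow_nonneg hd.le α)
    rcases le_or_gt 0 α with hα | hα
    · exact le_trans (Real.rpow_le_rpow hq.le hqu hα) (le_max_right _ _)
    · exact le_trans (Real.rpow_le_rpow_of_nonpos hcl hql hα.le) (le_max_left _ _)

end S7

namespace S7

local notation "ab" => norm

lemma inv_mul_ofReal_le {X Y Cc : ℝ} (hX : 0 < X) (hC : 0 ≤ Cc) (h : Y ≤ Cc * X) :
    (ENNReal.ofReal X)⁻¹ * ENNReal.ofReal Y ≤ ENNReal.ofReal Cc := by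
  calc (ENNReal.ofReal X)⁻¹ * ENNReal.ofReal Y
      ≤ (ENNReal.ofReal X)⁻¹ * (ENNReal.ofReal Cc * ENNReal.ofReal X) := by
        apply mul_le_mul_right
        rw [← ENNReal.ofReal_mul hC]
        exact ENNReal.ofReal_le_ofReal h
  _ = ENNReal.ofReal Cc * ((ENNReal.ofReal X)⁻¹ * ENNReal.ofReal X) := by ring
  _ = ENNReal.ofReal Cc := by
      rw [ENNReal.inv_mul_cancel (ENNReal.ofReal_pos.2 hX).ne' ENNReal.ofReal_ne_top, mul_one]

lemma ofReal_le_inv_mul {X Y Cc : ℝ} (hX : 0 < X) (hC : 0 ≤ Cc) (h : Cc * X ≤ Y) :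
    ENNReal.ofReal Cc ≤ (ENNReal.ofReal X)⁻¹ * ENNReal.ofReal Y := by
  calc ENNReal.ofReal Cc
      = ENNReal.ofReal Cc * ((ENNReal.ofReal X)⁻¹ * ENNReal.ofReal X) := by
        rw [ENNReal.inv_mul_cancel (ENNReal.ofReal_pos.2 hX).ne' ENNReal.ofReal_ne_top, mul_one]
  _ = (ENNReal.ofReal X)⁻¹ * (ENNReal.ofReal Cc * ENNReal.ofReal X) := by ring
  _ ≤ (ENNReal.ofReal X)⁻¹ * ENNReal.ofReal Y := by
        apply mul_le_mul_right
        rw [← ENNReal.ofReal_mul hC]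
        exact ENNReal.ofReal_le_ofReal h

lemma upper_integral {α r t : ℝ} (hα : -1 < α) (hr : 0 < r) (ht : 0 < t) (μ : Measure ℂ) :
    ∃ C : ℝ, 0 < C ∧ ∀ a : ℂ, ab a < 1 →
      ∫⁻ w in bergmanDisk a r, gk α w * μ (bergmanDisk w t) ∂(mA α)
        ≤ ENNReal.ofReal C * μ (bergmanDisk a (r + t)) := by
  set k := tau r with hk_def
  have hk0 : 0 < k := tau_pos hr
  have hk1 : k < 1 := tau_lt_one r
  set cL : ℝ := (1 - k^2)/4 with hcL_def
  set cU : ℝ := 4/(1 - k^2) with hcU_def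
  have hcL0 : 0 < cL := by rw [hcL_def]; nlinarith
  have hk2 : (0:ℝ) < 1 - k^2 := by nlinarith
  have hcU0 : 0 < cU := by rw [hcU_def]; positivity
  set RR : ℝ := 2*k/(1-k) with hRR_def
  have hk3 : (0:ℝ) < 1 - k := by linarith
  have hRR0 : 0 < RR := by rw [hRR_def]; positivity
  set cM : ℝ := max (cL ^ α) (cU ^ α) with hcM_def
  have hcM0 : 0 < cM := lt_max_of_lt_left (Real.rpow_pos_of_pos hcL0 α)
  have hcLp : 0 < cL ^ (α + 2) := Real.rpow_pos_of_pos hcL0 _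
  set C : ℝ := (cL ^ (α+2))⁻¹ * cM * RR^2 with hC_def
  have hC0 : 0 < C := by positivity
  refine ⟨C, hC0, ?_⟩
  intro a ha
  set d : ℝ := 1 - ab a with hd_def
  have hd0 : 0 < d := by rw [hd_def]; linarith
  set M := μ (bergmanDisk a (r + t)) with hM_def
  rcases eq_or_ne M ⊤ with hM | hM
  · rw [hM, ENNReal.mul_top (by simp [ENNReal.ofReal_pos.2 hC0, (ENNReal.ofReal_pos.2 hC0).ne'])]
    exact le_top
  have hDmeas : MeasurableSet (bergmanDisk a r) := measurableSet_bergmanDisk ha hr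
  -- pointwise facts on the disk
  have hmem : ∀ w ∈ bergmanDisk a r, ab w < 1 ∧ pseudoDist w a < k :=
    fun w hw => (mem_bergmanDisk_iff ha hr).1 hw
  have hμle : ∀ w ∈ bergmanDisk a r, μ (bergmanDisk w t) ≤ M := by
    intro w hw
    obtain ⟨hw1, hw2⟩ := hmem w hw
    apply measure_mono
    intro z hz
    obtain ⟨hz1, hz2⟩ := (mem_bergmanDisk_iff hw1 ht).1 hz
    have htr := pseudo_triangle_tau hz1 ha hw1 ht hr hz2.le hw2
    rw [add_comm t r] at htr
    exact (mem_bergmanDisk_iff ha (by linarith)).2 ⟨hz1, htr⟩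
  set Ginv := (ENNReal.ofReal ((cL * d) ^ (α+2)))⁻¹ with hGinv_def
  have hgle : ∀ w ∈ bergmanDisk a r, gk α w ≤ Ginv := by
    intro w hw
    obtain ⟨hw1, hw2⟩ := hmem w hw
    have hlow := one_sub_lower ha hw1 hk0.le hk1 hw2
    rw [gk, hGinv_def]
    rw [ENNReal.inv_le_inv]
    apply ENNReal.ofReal_le_ofReal
    apply Real.rpow_le_rpow (mul_nonneg hcL0.le hd0.le) ?_ (by linarith)
    rw [hcL_def, hd_def]; linarith
  -- measure of the disk
  have hmA_le : mA α (bergmanDisk a r)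
      ≤ ENNReal.ofReal (cM * d ^ α) * (ENNReal.ofReal (RR * d))^2 := by
    rw [mA_apply α hDmeas]
    calc ∫⁻ w in bergmanDisk a r, ENNReal.ofReal ((1 - ab w) ^ α) ∂m2
        ≤ ∫⁻ _ in bergmanDisk a r, ENNReal.ofReal (cM * d ^ α) ∂m2 := by
          apply setLIntegral_mono_ae' hDmeas
          apply Filter.Eventually.of_forall
          intro w hw
          obtain ⟨hw1, hw2⟩ := hmem w hw
          have hlow := one_sub_lower ha hw1 hk0.le hk1 hw2
          have hup := one_sub_upper ha hw1 hk0.le hk1 hw2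
          have := (rpow_ratio (α := α) (x := 1 - ab w) hd0 hcL0 hcU0
            (by rw [hcL_def, hd_def]; linarith)
            (by rw [hcU_def, hd_def]; linarith)).2
          apply ENNReal.ofReal_le_ofReal
          rw [hcM_def]
          exact this
    _ = ENNReal.ofReal (cM * d ^ α) * m2 (bergmanDisk a r) := setLIntegral_const _ _
    _ ≤ ENNReal.ofReal (cM * d ^ α) * m2 (Metric.ball a (RR * d)) := by
          apply mul_le_mul_right
          apply measure_mono
          intro w hw
          obtain ⟨hw1, hw2⟩ := hmem w hw
          have := bergman_subset_euclid ha hw1 hk0.le hk1 hw2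
          rw [Metric.mem_ball, Complex.dist_eq]
          rw [hRR_def, hd_def]
          exact this
    _ = ENNReal.ofReal (cM * d ^ α) * (ENNReal.ofReal (RR * d))^2 := by rw [m2_ball]
  -- main calc
  calc ∫⁻ w in bergmanDisk a r, gk α w * μ (bergmanDisk w t) ∂(mA α)
      ≤ ∫⁻ _ in bergmanDisk a r, Ginv * M ∂(mA α) := by
        apply setLIntegral_mono_ae' hDmeas
        apply Filter.Eventually.of_forall
        intro w hw
        exact mul_le_mul' (hgle w hw) (hμle w hw)
  _ = Ginv * M * mA α (bergmanDisk a r) := setLIntegral_const _ _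
  _ = (Ginv * mA α (bergmanDisk a r)) * M := by ring
  _ ≤ (Ginv * (ENNReal.ofReal (cM * d ^ α) * (ENNReal.ofReal (RR * d))^2)) * M := by
        exact mul_le_mul_left (mul_le_mul_right hmA_le _) M
  _ ≤ ENNReal.ofReal C * M := by
        apply mul_le_mul_left
        rw [hGinv_def]
        have hsq : (ENNReal.ofReal (RR * d))^2 = ENNReal.ofReal ((RR*d)^2) := by
          rw [ENNReal.ofReal_pow (by positivity)]
        rw [hsq, ← ENNReal.ofReal_mul (by positivity)]
        apply inv_mul_ofReal_le (by positivity) hC0.le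
        -- real inequality: cM * d^α * (RR*d)^2 ≤ C * (cL*d)^(α+2)
        have e1 : (cL * d) ^ (α+2) = cL ^ (α+2) * d ^ (α+2) := Real.mul_rpow hcL0.le hd0.le
        have e2 : d ^ (α + 2) = d ^ α * d ^ (2:ℝ) := Real.rpow_add hd0 α 2
        have e3 : d ^ (2:ℝ) = d ^ (2:ℕ) := Real.rpow_natCast d 2
        have e4 : (RR * d)^2 = RR^2 * d^(2:ℕ) := by ring
        rw [e1, e2, e3, e4, hC_def]
        apply le_of_eq
        field_simp

end S7

namespace S7

local notation "ab" => norm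

lemma ball_facts {w₀ w : ℂ} {ε : ℝ} (hw₀ : ab w₀ < 1) (hε0 : 0 < ε) (hε1 : ε ≤ 1/2)
    (hw : w ∈ Metric.ball w₀ (ε * (1 - ab w₀))) :
    ab w < 1 ∧ (1 - ab w₀)/2 ≤ 1 - ab w ∧ 1 - ab w ≤ 2 * (1 - ab w₀) := by
  rw [Metric.mem_ball, Complex.dist_eq] at hw
  have hd₀ : 0 < 1 - ab w₀ := by linarith
  have h1 : ab w₀ - ab w ≤ ab (w₀ - w) := by
    have := norm_sub_norm_le w₀ w
    simpa using this
  have h2 : ab w - ab w₀ ≤ ab (w - w₀) := by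
    have := norm_sub_norm_le w w₀
    simpa using this
  have h3 : ab (w₀ - w) = ab (w - w₀) := norm_sub_rev _ _
  constructor
  · nlinarith
  constructor
  · nlinarith
  · nlinarith

lemma ball_lintegral_lower {α : ℝ} (hα : -1 < α) {w₀ : ℂ} {ε : ℝ} (hw₀ : ab w₀ < 1)
    (hε0 : 0 < ε) (hε1 : ε ≤ 1/2) :
    ENNReal.ofReal (min ((2:ℝ)⁻¹ ^ α) ((2:ℝ) ^ α) * ε^2 * (((2:ℝ) ^ (α+2))⁻¹))
      ≤ ∫⁻ w in Metric.ball w₀ (ε * (1 - ab w₀)), gk α w ∂(mA α) := by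
  set d₀ : ℝ := 1 - ab w₀ with hd₀_def
  have hd₀ : 0 < d₀ := by rw [hd₀_def]; linarith
  set R : ℝ := ε * d₀ with hR_def
  have hR0 : 0 < R := by positivity
  set B := Metric.ball w₀ R with hB_def
  have measB : MeasurableSet B := measurableSet_ball
  set cc : ℝ := min ((2:ℝ)⁻¹ ^ α) ((2:ℝ) ^ α) with hcc_def
  have hcc0 : 0 < cc := lt_min (Real.rpow_pos_of_pos (by norm_num) α)
    (Real.rpow_pos_of_pos (by norm_num) α)
  have h2p : (0:ℝ) < (2:ℝ) ^ (α+2) := Real.rpow_pos_of_pos (by norm_num) _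
  set Gl := (ENNReal.ofReal ((2*d₀) ^ (α+2)))⁻¹ with hGl_def
  have hgk : ∀ w ∈ B, Gl ≤ gk α w := by
    intro w hw
    obtain ⟨hw1, hlow, hup⟩ := ball_facts hw₀ hε0 hε1 hw
    rw [gk, hGl_def, ENNReal.inv_le_inv]
    apply ENNReal.ofReal_le_ofReal
    exact Real.rpow_le_rpow (by linarith) (by linarith) (by linarith)
  have hmA : ENNReal.ofReal (cc * d₀ ^ α) * (ENNReal.ofReal R)^2 ≤ mA α B := by
    rw [mA_apply α measB]
    calc ENNReal.ofReal (cc * d₀ ^ α) * (ENNReal.ofReal R)^2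
        = ENNReal.ofReal (cc * d₀ ^ α) * m2 B := by rw [hB_def, m2_ball]
    _ = ∫⁻ _ in B, ENNReal.ofReal (cc * d₀ ^ α) ∂m2 := (setLIntegral_const _ _).symm
    _ ≤ ∫⁻ w in B, ENNReal.ofReal ((1 - ab w) ^ α) ∂m2 := by
        apply setLIntegral_mono_ae' measB
        apply Filter.Eventually.of_forall
        intro w hw
        obtain ⟨hw1, hlow, hup⟩ := ball_facts hw₀ hε0 hε1 hw
        apply ENNReal.ofReal_le_ofReal
        rw [hcc_def]
        exact (rpow_ratio (α := α) (x := 1 - ab w) hd₀ (by norm_num) (by norm_num)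
          (by rw [hd₀_def]; linarith) (by rw [hd₀_def]; linarith)).1
  calc ENNReal.ofReal (cc * ε^2 * (((2:ℝ) ^ (α+2))⁻¹))
      ≤ Gl * (ENNReal.ofReal (cc * d₀ ^ α) * (ENNReal.ofReal R)^2) := by
        rw [hGl_def]
        have hsq : (ENNReal.ofReal R)^2 = ENNReal.ofReal (R^2) :=
          (ENNReal.ofReal_pow hR0.le 2).symm
        rw [hsq, ← ENNReal.ofReal_mul (by positivity)]
        apply ofReal_le_inv_mul (by positivity) (by positivity)
        apply le_of_eq
        have e1 : (2*d₀) ^ (α+2) = (2:ℝ) ^ (α+2) * d₀ ^ (α+2) :=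
          Real.mul_rpow (by norm_num) hd₀.le
        have e2 : d₀ ^ (α + 2) = d₀ ^ α * d₀ ^ (2:ℝ) := Real.rpow_add hd₀ α 2
        have e3 : d₀ ^ (2:ℝ) = d₀ ^ (2:ℕ) := Real.rpow_natCast d₀ 2
        have e4 : R^2 = ε^2 * d₀^(2:ℕ) := by rw [hR_def]; ring
        rw [e1, e2, e3, e4]
        field_simp
  _ ≤ Gl * mA α B := mul_le_mul_right hmA _
  _ = ∫⁻ _ in B, Gl ∂(mA α) := (setLIntegral_const _ _).symm
  _ ≤ ∫⁻ w in B, gk α w ∂(mA α) := by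
        apply setLIntegral_mono_ae' measB
        exact Filter.Eventually.of_forall hgk

end S7

namespace S7

local notation "ab" => norm
local notation "cj" => (starRingEnd ℂ)

lemma mA_disk_lt_top {α r : ℝ} (hα : -1 < α) (hr : 0 < r) {a : ℂ} (ha : ab a < 1) :
    mA α (bergmanDisk a r) < ⊤ := by
  set k := tau r with hk_def
  have hk0 : 0 < k := tau_pos hr
  have hk1 : k < 1 := tau_lt_one r
  have hk2 : (0:ℝ) < 1 - k^2 := by nlinarith
  have hk3 : (0:ℝ) < 1 - k := by linarith
  set cL : ℝ := (1 - k^2)/4 with hcL_def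
  set cU : ℝ := 4/(1 - k^2) with hcU_def
  have hcL0 : 0 < cL := by rw [hcL_def]; positivity
  have hcU0 : 0 < cU := by rw [hcU_def]; positivity
  set RR : ℝ := 2*k/(1-k) with hRR_def
  have hRR0 : 0 < RR := by rw [hRR_def]; positivity
  set d : ℝ := 1 - ab a with hd_def
  have hd0 : 0 < d := by rw [hd_def]; linarith
  have hDmeas : MeasurableSet (bergmanDisk a r) := measurableSet_bergmanDisk ha hr
  have hmem : ∀ w ∈ bergmanDisk a r, ab w < 1 ∧ pseudoDist w a < k :=
    fun w hw => (mem_bergmanDisk_iff ha hr).1 hw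
  have hbound : mA α (bergmanDisk a r)
      ≤ ENNReal.ofReal (max (cL ^ α) (cU ^ α) * d ^ α) * m2 (Metric.ball a (RR * d)) := by
    rw [mA_apply α hDmeas]
    calc ∫⁻ w in bergmanDisk a r, ENNReal.ofReal ((1 - ab w) ^ α) ∂m2
        ≤ ∫⁻ _ in bergmanDisk a r, ENNReal.ofReal (max (cL ^ α) (cU ^ α) * d ^ α) ∂m2 := by
          apply setLIntegral_mono_ae' hDmeas
          apply Filter.Eventually.of_forall
          intro w hw
          obtain ⟨hw1, hw2⟩ := hmem w hw
          have hlow := one_sub_lower ha hw1 hk0.le hk1 hw2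
          have hup := one_sub_upper ha hw1 hk0.le hk1 hw2
          apply ENNReal.ofReal_le_ofReal
          exact (rpow_ratio (α := α) (x := 1 - ab w) hd0 hcL0 hcU0
            (by rw [hcL_def, hd_def]; linarith)
            (by rw [hcU_def, hd_def]; linarith)).2
    _ = ENNReal.ofReal (max (cL ^ α) (cU ^ α) * d ^ α) * m2 (bergmanDisk a r) :=
          setLIntegral_const _ _
    _ ≤ _ := by
          apply mul_le_mul_right
          apply measure_mono
          intro w hw
          obtain ⟨hw1, hw2⟩ := hmem w hw
          have := bergman_subset_euclid ha hw1 hk0.le hk1 hw2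
          rw [Metric.mem_ball, Complex.dist_eq, hRR_def, hd_def]
          exact this
  apply lt_of_le_of_lt hbound
  rw [m2_ball]
  exact ENNReal.mul_lt_top ENNReal.ofReal_lt_top (by
    exact ENNReal.pow_lt_top ENNReal.ofReal_lt_top)

lemma lower_integral {α r s t : ℝ} (hα : -1 < α) (hr : 0 < r) (hs : 0 < s) (hst : s < t)
    (μ : Measure ℂ) :
    ∃ C₁ : ℝ, 0 < C₁ ∧ ∀ a : ℂ, ab a < 1 →
      ENNReal.ofReal C₁ * μ (bergmanDisk a (r + s))
        ≤ ∫⁻ w in bergmanDisk a r, gk α w * μ (bergmanDisk w t) ∂(mA α) := by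
  have ht : 0 < t := lt_trans hs hst
  have hrs : 0 < r + s := by linarith
  -- constants
  set m : ℝ := min r (t - s) with hm_def
  have hm0 : 0 < m := lt_min hr (by linarith)
  have hmr : m ≤ r := min_le_left _ _
  have hmts : m ≤ t - s := min_le_right _ _
  set del : ℝ := r - m/2 with hdel_def
  have hdel0 : 0 < del := by rw [hdel_def]; linarith
  set T₀ : ℝ := s + m/2 with hT₀_def
  have hT₀0 : 0 < T₀ := by rw [hT₀_def]; linarith
  have hsum : del + T₀ = r + s := by rw [hdel_def, hT₀_def]; ring
  set t₀ : ℝ := t - m/8 with ht₀_def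
  have ht₀0 : 0 < t₀ := by rw [ht₀_def]; linarith
  have hT₀t₀ : T₀ < t₀ := by rw [hT₀_def, ht₀_def]; linarith
  set t₁ : ℝ := t - m/16 with ht₁_def
  have ht₁0 : 0 < t₁ := by rw [ht₁_def]; linarith
  set ε : ℝ := tau (m/8) / 2 with hε_def
  have hε0 : 0 < ε := by rw [hε_def]; have := tau_pos (show (0:ℝ) < m/8 by linarith); linarith
  have hεhalf : ε ≤ 1/2 := by
    rw [hε_def]; have := tau_lt_one (m/8); linarith
  have hεtau : ε < tau (m/8) := by
    rw [hε_def]; have := tau_pos (show (0:ℝ) < m/8 by linarith); linarith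
  set ε₂ : ℝ := tau (m/16) / 2 with hε₂_def
  have hε₂0 : 0 < ε₂ := by rw [hε₂_def]; have := tau_pos (show (0:ℝ) < m/16 by linarith); linarith
  have hε₂half : ε₂ ≤ 1/2 := by
    rw [hε₂_def]; have := tau_lt_one (m/16); linarith
  have hε₂tau : ε₂ < tau (m/16) := by
    rw [hε₂_def]; have := tau_pos (show (0:ℝ) < m/16 by linarith); linarith
  set cc : ℝ := min ((2:ℝ)⁻¹ ^ α) ((2:ℝ) ^ α) with hcc_def
  have hcc0 : 0 < cc := lt_min (Real.rpow_pos_of_pos (by norm_num) α)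
    (Real.rpow_pos_of_pos (by norm_num) α)
  have h2p : (0:ℝ) < (2:ℝ) ^ (α+2) := Real.rpow_pos_of_pos (by norm_num) _
  set C₁ : ℝ := cc * ε^2 * (((2:ℝ) ^ (α+2))⁻¹) with hC₁_def
  have hC₁0 : 0 < C₁ := by
    rw [hC₁_def]
    exact mul_pos (mul_pos hcc0 (pow_pos hε0 2)) (inv_pos.2 h2p)
  refine ⟨C₁, hC₁0, ?_⟩
  intro a ha
  set K := bergmanDisk a (r + s) with hK_def
  have measK : MeasurableSet K := measurableSet_bergmanDisk ha hrs
  set D := bergmanDisk a r with hD_def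
  have measD : MeasurableSet D := measurableSet_bergmanDisk ha hr
  -- the product set
  set S : Set (ℂ × ℂ) :=
    {p : ℂ × ℂ | ab p.1 < 1 ∧ ab p.2 < 1 ∧ ab (p.1 - p.2) < tau t * ab (1 - cj p.1 * p.2)}
    with hS_def
  have hSmeas : MeasurableSet S := by
    have c1 : Continuous fun p : ℂ × ℂ => ab p.1 := continuous_norm.comp continuous_fst
    have c2 : Continuous fun p : ℂ × ℂ => ab p.2 := continuous_norm.comp continuous_snd
    have c3 : Continuous fun p : ℂ × ℂ => ab (p.1 - p.2) :=
      continuous_norm.comp (continuous_fst.sub continuous_snd)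
    have c4 : Continuous fun p : ℂ × ℂ => tau t * ab (1 - cj p.1 * p.2) := by
      apply continuous_const.mul
      apply continuous_norm.comp
      exact continuous_const.sub ((Complex.continuous_conj.comp continuous_fst).mul continuous_snd)
    exact (((isOpen_lt c1 continuous_const).and
      ((isOpen_lt c2 continuous_const).and (isOpen_lt c3 c4)))).measurableSet
  have hSslice : ∀ w : ℂ, ab w < 1 → {z : ℂ | (w, z) ∈ S} = bergmanDisk w t := by
    intro w hw
    rw [hD_def] at *
    rw [bergmanDisk_eq hw ht]
    ext z
    constructor
    · rintro ⟨_, h2, h3⟩; exact ⟨h2, h3⟩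
    · rintro ⟨h2, h3⟩; exact ⟨hw, h2, h3⟩
  -- membership in S from pseudo-distance
  have hmemS : ∀ w z : ℂ, ab w < 1 → ab z < 1 → pseudoDist z w < tau t → (w, z) ∈ S := by
    intro w z hw hz hp
    refine ⟨hw, hz, ?_⟩
    rw [pseudoDist_eq, div_lt_iff₀ (abs_pos_of_disk hw hz)] at hp
    exact hp
  -- the per-z estimate
  have key : ∀ z ∈ K, ENNReal.ofReal C₁
      ≤ ∫⁻ w in D, S.indicator (fun _ => (1:ℝ≥0∞)) (w, z) * gk α w ∂(mA α) := by
    intro z hzK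
    obtain ⟨hz1, hz2⟩ := (mem_bergmanDisk_iff ha hrs).1 hzK
    have hz2' : pseudoDist z a < tau (del + T₀) := by rwa [hsum]
    obtain ⟨w₀, hw₀1, hw₀2, hw₀3⟩ := exists_mid ha hz1 hdel0 hT₀0 hz2'
    set B := Metric.ball w₀ (ε * (1 - ab w₀)) with hB_def
    have hBp : ∀ w ∈ B, ab w < 1 ∧ pseudoDist w w₀ < ε := by
      intro w hw
      rw [hB_def, Metric.mem_ball, Complex.dist_eq] at hw
      exact ball_subset_pseudo hw₀1 hε0 (by linarith) hw
    have hBD : B ⊆ D := by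
      intro w hw
      obtain ⟨hw1, hw2⟩ := hBp w hw
      have h1 : pseudoDist w w₀ ≤ tau (m/8) := le_of_lt (lt_trans hw2 hεtau)
      have h2 : pseudoDist w₀ a < tau (del + m/16) :=
        lt_of_le_of_lt hw₀2 (tau_lt_tau (by linarith))
      have := pseudo_triangle_tau hw1 ha hw₀1 (by linarith) (by linarith) h1 h2
      have hlt : pseudoDist w a < tau r :=
        lt_trans this (tau_lt_tau (by linarith))
      exact (mem_bergmanDisk_iff ha hr).2 ⟨hw1, hlt⟩
    have hBS : ∀ w ∈ B, (w, z) ∈ S := by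
      intro w hw
      obtain ⟨hw1, hw2⟩ := hBp w hw
      have h1 : pseudoDist z w₀ ≤ tau t₀ :=
        le_of_lt (lt_trans hw₀3 (tau_lt_tau hT₀t₀))
      have h2 : pseudoDist w₀ w < tau (m/8) := by
        rw [pseudoDist_symm]; exact lt_trans hw2 hεtau
      have := pseudo_triangle_tau hz1 hw1 hw₀1 ht₀0 (by linarith) h1 h2
      have heq : t₀ + m/8 = t := by rw [ht₀_def]; ring
      rw [heq] at this
      exact hmemS w z hw1 hz1 this
    calc ENNReal.ofReal C₁
        ≤ ∫⁻ w in B, gk α w ∂(mA α) := by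
          rw [hC₁_def]
          exact ball_lintegral_lower hα hw₀1 hε0 hεhalf
    _ = ∫⁻ w in D, B.indicator (gk α) w ∂(mA α) := by
          rw [lintegral_indicator Metric.isOpen_ball.measurableSet,
            Measure.restrict_restrict Metric.isOpen_ball.measurableSet,
            Set.inter_eq_self_of_subset_left hBD]
    _ ≤ ∫⁻ w in D, S.indicator (fun _ => (1:ℝ≥0∞)) (w, z) * gk α w ∂(mA α) := by
          apply lintegral_mono
          intro w
          show B.indicator (gk α) w ≤ S.indicator (fun _ => (1:ℝ≥0∞)) (w, z) * gk α w
          by_cases hw : w ∈ B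
          · rw [Set.indicator_of_mem hw, Set.indicator_of_mem (hBS w hw), one_mul]
          · rw [Set.indicator_of_notMem hw]; exact zero_le'
  -- inner integral bound (for the Fubini argument)
  have hinner : ∀ w : ℂ,
      (∫⁻ z, S.indicator (fun _ => (1:ℝ≥0∞)) (w, z) * gk α w ∂(μ.restrict K))
        ≤ gk α w * μ (bergmanDisk w t) := by
    intro w
    by_cases hw1 : ab w < 1
    · have hslice : MeasurableSet {z : ℂ | (w, z) ∈ S} :=
        hSmeas.preimage measurable_prodMk_left
      have heq : (fun z => S.indicator (fun _ => (1:ℝ≥0∞)) (w, z) * gk α w)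
          = fun z => ({z : ℂ | (w, z) ∈ S}).indicator (fun _ => gk α w) z := by
        funext z
        by_cases hz : (w, z) ∈ S
        · rw [Set.indicator_of_mem hz,
            Set.indicator_of_mem (show z ∈ {z : ℂ | (w, z) ∈ S} from hz), one_mul]
        · rw [Set.indicator_of_notMem hz,
            Set.indicator_of_notMem (show z ∉ {z : ℂ | (w, z) ∈ S} from hz), zero_mul]
      rw [heq, lintegral_indicator hslice, setLIntegral_const, hSslice w hw1,
        Measure.restrict_apply (measurableSet_bergmanDisk hw1 ht)]
      exact mul_le_mul_right (measure_mono Set.inter_subset_left) _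
    · have hz0 : ∀ z : ℂ, S.indicator (fun _ => (1:ℝ≥0∞)) (w, z) * gk α w = 0 := by
        intro z
        rw [Set.indicator_of_notMem (fun h => hw1 h.1), zero_mul]
      simp only [hz0, lintegral_zero]
      exact zero_le'
  -- case split on an infinite piece
  by_cases hbig : ∃ q : ℂ, ab q < 1 ∧ pseudoDist q a < tau (r - m/4)
      ∧ μ (bergmanDisk q t₁) = ⊤
  · -- infinite branch
    obtain ⟨q, hq1, hq2, hq3⟩ := hbig
    set B₃ := Metric.ball q (ε₂ * (1 - ab q)) with hB₃_def
    have hB₃p : ∀ w ∈ B₃, ab w < 1 ∧ pseudoDist w q < ε₂ := by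
      intro w hw
      rw [hB₃_def, Metric.mem_ball, Complex.dist_eq] at hw
      exact ball_subset_pseudo hq1 hε₂0 (by linarith) hw
    have hB₃D : B₃ ⊆ D := by
      intro w hw
      obtain ⟨hw1, hw2⟩ := hB₃p w hw
      have h1 : pseudoDist w q ≤ tau (m/16) := le_of_lt (lt_trans hw2 hε₂tau)
      have := pseudo_triangle_tau hw1 ha hq1 (by linarith) (by linarith) h1 hq2
      have hlt : pseudoDist w a < tau r := lt_trans this (tau_lt_tau (by linarith))
      exact (mem_bergmanDisk_iff ha hr).2 ⟨hw1, hlt⟩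
    have hB₃top : ∀ w ∈ B₃, μ (bergmanDisk w t) = ⊤ := by
      intro w hw
      obtain ⟨hw1, hw2⟩ := hB₃p w hw
      rw [eq_top_iff, ← hq3]
      apply measure_mono
      intro z' hz'
      obtain ⟨hz'1, hz'2⟩ := (mem_bergmanDisk_iff hq1 ht₁0).1 hz'
      have h2 : pseudoDist q w < tau (m/16) := by
        rw [pseudoDist_symm]; exact lt_trans hw2 hε₂tau
      have := pseudo_triangle_tau hz'1 hw1 hq1 ht₁0 (by linarith) hz'2.le h2
      have heq : t₁ + m/16 = t := by rw [ht₁_def]; ring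
      rw [heq] at this
      exact (mem_bergmanDisk_iff hw1 ht).2 ⟨hz'1, this⟩
    have hcc0' : (0:ℝ) < min ((2:ℝ)⁻¹ ^ α) ((2:ℝ) ^ α) := lt_min
      (Real.rpow_pos_of_pos (by norm_num) α) (Real.rpow_pos_of_pos (by norm_num) α)
    have hpos2 : (0:ℝ) < min ((2:ℝ)⁻¹ ^ α) ((2:ℝ) ^ α) * ε₂^2 * (((2:ℝ) ^ (α+2))⁻¹) :=
      mul_pos (mul_pos hcc0' (pow_pos hε₂0 2)) (inv_pos.2 h2p)
    have hmAne : mA α B₃ ≠ 0 := by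
      intro h0
      have hlow := ball_lintegral_lower (α := α) hα hq1 hε₂0 hε₂half
      rw [Measure.restrict_eq_zero.2 h0, lintegral_zero_measure] at hlow
      exact lt_irrefl (0:ℝ≥0∞) (lt_of_lt_of_le (ENNReal.ofReal_pos.2 hpos2) hlow)
    have htop : ∫⁻ w in D, gk α w * μ (bergmanDisk w t) ∂(mA α) = ⊤ := by
      rw [eq_top_iff]
      calc (⊤:ℝ≥0∞) = ⊤ * ((mA α).restrict D) B₃ := by
            rw [Measure.restrict_apply Metric.isOpen_ball.measurableSet,
              Set.inter_eq_self_of_subset_left hB₃D, ENNReal.top_mul hmAne]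
      _ = ∫⁻ w in D, B₃.indicator (fun _ => (⊤:ℝ≥0∞)) w ∂(mA α) :=
            (lintegral_indicator_const Metric.isOpen_ball.measurableSet _).symm
      _ ≤ ∫⁻ w in D, gk α w * μ (bergmanDisk w t) ∂(mA α) := by
            apply lintegral_mono
            intro w
            show B₃.indicator (fun _ => (⊤:ℝ≥0∞)) w ≤ gk α w * μ (bergmanDisk w t)
            by_cases hw : w ∈ B₃
            · rw [Set.indicator_of_mem hw, hB₃top w hw,
                ENNReal.mul_top (gk_pos α w).ne']
            · rw [Set.indicator_of_notMem hw]; exact zero_le'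
    rw [htop]
    exact le_top
  · -- σ-finite branch
    push_neg at hbig
    -- countable dense set and cover
    obtain ⟨Q, hQc, hQd⟩ := TopologicalSpace.exists_countable_dense ℂ
    have hcover : ∀ z ∈ K, ∃ q ∈ Q, ab q < 1 ∧ pseudoDist q a < tau (r - m/4)
        ∧ z ∈ bergmanDisk q t₁ := by
      intro z hzK
      obtain ⟨hz1, hz2⟩ := (mem_bergmanDisk_iff ha hrs).1 hzK
      have hz2' : pseudoDist z a < tau (del + T₀) := by rwa [hsum]
      obtain ⟨w₀, hw₀1, hw₀2, hw₀3⟩ := exists_mid ha hz1 hdel0 hT₀0 hz2'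
      have hd₀ : 0 < ε₂ * (1 - ab w₀) := by
        apply mul_pos hε₂0; linarith
      obtain ⟨q, hqQ, hqB⟩ := hQd.exists_mem_open Metric.isOpen_ball
        ⟨w₀, Metric.mem_ball_self hd₀⟩
      rw [Metric.mem_ball, Complex.dist_eq] at hqB
      obtain ⟨hq1, hq2⟩ := ball_subset_pseudo hw₀1 hε₂0 (by linarith) hqB
      refine ⟨q, hqQ, hq1, ?_, ?_⟩
      · have h1 : pseudoDist q w₀ ≤ tau (m/16) := le_of_lt (lt_trans hq2 hε₂tau)
        have h2 : pseudoDist w₀ a < tau (del + m/16) :=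
          lt_of_le_of_lt hw₀2 (tau_lt_tau (by linarith))
        have := pseudo_triangle_tau hq1 ha hw₀1 (by linarith) (by linarith) h1 h2
        exact lt_trans this (tau_lt_tau (by rw [hdel_def]; linarith))
      · have h1 : pseudoDist z w₀ ≤ tau T₀ := le_of_lt hw₀3
        have h2 : pseudoDist w₀ q < tau (m/16) := by
          rw [pseudoDist_symm]; exact lt_trans hq2 hε₂tau
        have := pseudo_triangle_tau hz1 hq1 hw₀1 hT₀0 (by linarith) h1 h2
        have hlt : pseudoDist z q < tau t₁ :=
          lt_trans this (tau_lt_tau (by rw [hT₀_def, ht₁_def]; linarith))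
        exact (mem_bergmanDisk_iff hq1 ht₁0).2 ⟨hz1, hlt⟩
    -- Q' and sigma-finiteness of μ.restrict K
    set Q' : Set ℂ := {q ∈ Q | ab q < 1 ∧ pseudoDist q a < tau (r - m/4)} with hQ'_def
    have hQ'c : Q'.Countable := hQc.mono (Set.sep_subset _ _)
    have haK : a ∈ K := (mem_bergmanDisk_iff ha hrs).2
      ⟨ha, by rw [pseudoDist_self]; exact tau_pos hrs⟩
    have hQ'ne : Q'.Nonempty := by
      obtain ⟨q, hqQ, hq1, hq2, _⟩ := hcover a haK
      exact ⟨q, hqQ, hq1, hq2⟩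
    obtain ⟨f, hf⟩ := hQ'c.exists_eq_range hQ'ne
    haveI hsf : SigmaFinite (μ.restrict K) := by
      refine ⟨⟨⟨fun n => bergmanDisk (f n) t₁ ∪ Kᶜ, fun n => trivial, ?_, ?_⟩⟩⟩
      · intro n
        have hfn : f n ∈ Q' := by rw [hf]; exact Set.mem_range_self n
        obtain ⟨hfnQ, hfn1, hfn2⟩ := hfn
        have hmeasn : MeasurableSet (bergmanDisk (f n) t₁) :=
          measurableSet_bergmanDisk hfn1 ht₁0
        calc μ.restrict K (bergmanDisk (f n) t₁ ∪ Kᶜ)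
            ≤ μ.restrict K (bergmanDisk (f n) t₁) + μ.restrict K Kᶜ := measure_union_le _ _
        _ = μ (bergmanDisk (f n) t₁ ∩ K) + μ (Kᶜ ∩ K) := by
            rw [Measure.restrict_apply hmeasn, Measure.restrict_apply measK.compl]
        _ = μ (bergmanDisk (f n) t₁ ∩ K) := by rw [Set.compl_inter_self, measure_empty, add_zero]
        _ ≤ μ (bergmanDisk (f n) t₁) := measure_mono Set.inter_subset_left
        _ < ⊤ := lt_top_iff_ne_top.2 (hbig (f n) hfn1 hfn2)
      · apply Set.eq_univ_of_forall
        intro x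
        by_cases hx : x ∈ K
        · obtain ⟨q, hqQ, hq1, hq2, hqmem⟩ := hcover x hx
          have hqQ' : q ∈ Q' := ⟨hqQ, hq1, hq2⟩
          rw [hf] at hqQ'
          obtain ⟨n, hn⟩ := hqQ'
          exact Set.mem_iUnion.2 ⟨n, Or.inl (hn ▸ hqmem)⟩
        · exact Set.mem_iUnion.2 ⟨0, Or.inr hx⟩
    haveI hfin : IsFiniteMeasure ((mA α).restrict D) :=
      ⟨by rw [Measure.restrict_apply_univ]; exact mA_disk_lt_top hα hr ha⟩
    -- Fubini
    set F : ℂ → ℂ → ℝ≥0∞ :=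
      fun w z => S.indicator (fun _ => (1:ℝ≥0∞)) (w, z) * gk α w with hF_def
    have hFmeas : AEMeasurable (Function.uncurry F)
        (((mA α).restrict D).prod (μ.restrict K)) := by
      have heq : Function.uncurry F
          = fun p : ℂ × ℂ => S.indicator (fun _ => (1:ℝ≥0∞)) p * gk α p.1 := rfl
      rw [heq]
      exact ((measurable_const.indicator hSmeas).mul
        ((measurable_gk α).comp measurable_fst)).aemeasurable
    have hswap := lintegral_lintegral_swap (μ := (mA α).restrict D)
      (ν := μ.restrict K) hFmeas
    calc ENNReal.ofReal C₁ * μ K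
        = ENNReal.ofReal C₁ * (μ.restrict K) K := by
          rw [Measure.restrict_apply measK, Set.inter_self]
    _ = ∫⁻ z, K.indicator (fun _ => ENNReal.ofReal C₁) z ∂(μ.restrict K) := by
          rw [lintegral_indicator_const measK]
    _ ≤ ∫⁻ z, (∫⁻ w, F w z ∂((mA α).restrict D)) ∂(μ.restrict K) := by
          apply lintegral_mono
          intro z
          by_cases hz : z ∈ K
          · rw [Set.indicator_of_mem hz]; exact key z hz
          · rw [Set.indicator_of_notMem hz]; exact zero_le'
    _ = ∫⁻ w, (∫⁻ z, F w z ∂(μ.restrict K)) ∂((mA α).restrict D) := hswap.symm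
    _ ≤ ∫⁻ w, gk α w * μ (bergmanDisk w t) ∂((mA α).restrict D) :=
          lintegral_mono hinner

end S7


/-- Two-sided estimate for Bergman-disk averages of a measure: for `α > -1`, `r > 0`,
`0 < s < t`,
`C₁ (1-|a|)^{-(α+2)} μ(D(a,r+s)) ≤ (1-|a|)^{-(α+2)} ∫_{D(a,r)} (1-|w|)^{-(α+2)} μ(D(w,t)) dm_α(w)
 ≤ C (1-|a|)^{-(α+2)} μ(D(a,r+t))` for all `a ∈ 𝔻`. -/
theorem statement7 (α r s t : ℝ) (hα : -1 < α) (hr : 0 < r) (hs : 0 < s) (hst : s < t)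
    (μ : Measure ℂ) (hμ : μ unitDiskᶜ = 0) :
    ∃ C₁ C : ℝ, 0 < C₁ ∧ 0 < C ∧ ∀ a ∈ unitDisk,
      (ENNReal.ofReal C₁ *
          ((ENNReal.ofReal ((1 - ‖a‖) ^ (α + 2)))⁻¹ * μ (bergmanDisk a (r + s)))
        ≤ (ENNReal.ofReal ((1 - ‖a‖) ^ (α + 2)))⁻¹ *
          ∫⁻ w in bergmanDisk a r,
            (ENNReal.ofReal ((1 - ‖w‖) ^ (α + 2)))⁻¹ * μ (bergmanDisk w t) ∂(mA α))
      ∧ ((ENNReal.ofReal ((1 - ‖a‖) ^ (α + 2)))⁻¹ *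
          ∫⁻ w in bergmanDisk a r,
            (ENNReal.ofReal ((1 - ‖w‖) ^ (α + 2)))⁻¹ * μ (bergmanDisk w t) ∂(mA α)
        ≤ ENNReal.ofReal C *
          ((ENNReal.ofReal ((1 - ‖a‖) ^ (α + 2)))⁻¹ * μ (bergmanDisk a (r + t)))) := by
  obtain ⟨C, hC0, hup⟩ := S7.upper_integral hα hr (lt_trans hs hst) μ
  obtain ⟨C₁, hC₁0, hlow⟩ := S7.lower_integral hα hr hs hst μ
  refine ⟨C₁, C, hC₁0, hC0, ?_⟩
  intro a haD
  have ha : ‖a‖ < 1 := S7.mem_unitDisk.1 haD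
  constructor
  · have h := hlow a ha
    calc ENNReal.ofReal C₁ *
          ((ENNReal.ofReal ((1 - ‖a‖) ^ (α + 2)))⁻¹ * μ (bergmanDisk a (r + s)))
        = (ENNReal.ofReal ((1 - ‖a‖) ^ (α + 2)))⁻¹ *
          (ENNReal.ofReal C₁ * μ (bergmanDisk a (r + s))) := by ring
    _ ≤ _ := mul_le_mul_right h _
  · have h := hup a ha
    calc (ENNReal.ofReal ((1 - ‖a‖) ^ (α + 2)))⁻¹ *
          ∫⁻ w in bergmanDisk a r,
            (ENNReal.ofReal ((1 - ‖w‖) ^ (α + 2)))⁻¹ * μ (bergmanDisk w t) ∂(mA α)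
        ≤ (ENNReal.ofReal ((1 - ‖a‖) ^ (α + 2)))⁻¹ *
          (ENNReal.ofReal C * μ (bergmanDisk a (r + t))) := mul_le_mul_right h _
    _ = ENNReal.ofReal C *
          ((ENNReal.ofReal ((1 - ‖a‖) ^ (α + 2)))⁻¹ * μ (bergmanDisk a (r + t))) := by
        ring
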